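/- Let Ω = {(x,y) ∈ ℝ × ℝ : x − y ∈ ℤ} with the subspace topology from ℝ². Define φ : ℝ → ℝ by φ(x) = 0 if x ≤ 1/2 and φ(x) = 1 otherwise, and F : Ω → ℝ by F(x,y) = φ(y) − φ(x). Then F is continuous at every diagonal point (x,x) ∈ Ω, but F is not continuous at the point (1/2, 3/2) ∈ Ω. -/
import Mathlib


def IntRel : Set (ℝ × ℝ) := {p | ∃ n : ℤ, p.1 - p.2 = (n : ℝ)}

noncomputable def phi : ℝ → ℝ := fun x => if x ≤ 1/2 then 0 else 1

noncomputable def Fmor : IntRel → ℝ := fun p => phi (p : ℝ × ℝ).2 - phi (p : ℝ × ℝ).1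

/-- `F` is continuous at every diagonal point of the integer-difference groupoid,
but not at the point `(1/2, 3/2)`. -/
theorem stmt3 :
    (∀ x : ℝ, ContinuousAt Fmor (⟨(x, x), ⟨0, by simp⟩⟩ : IntRel)) ∧
    ¬ ContinuousAt Fmor (⟨(1/2, 3/2), ⟨-1, by norm_num⟩⟩ : IntRel) := by
  constructor
  · intro x
    set p : IntRel := ⟨(x, x), ⟨0, by simp⟩⟩ with hp
    have hcont : Continuous (fun q : IntRel => |(q : ℝ × ℝ).1 - (q : ℝ × ℝ).2|) := by
      fun_prop
    have hlt : ∀ᶠ q : IntRel in nhds p, |(q : ℝ × ℝ).1 - (q : ℝ × ℝ).2| < 1 := by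
      have h0 : |(p : ℝ × ℝ).1 - (p : ℝ × ℝ).2| < 1 := by simp [hp]
      exact (hcont.continuousAt (x := p)).eventually_lt continuousAt_const h0
    have hev : ∀ᶠ q in nhds p, Fmor q = Fmor p := by
      filter_upwards [hlt] with q hq
      obtain ⟨n, hn⟩ := q.2
      have hn1 : |(n : ℝ)| < 1 := hn ▸ hq
      have hn0 : n = 0 := by
        have h : |n| < 1 := by exact_mod_cast hn1
        rw [abs_lt] at h
        omega
      have heq : (q : ℝ × ℝ).1 = (q : ℝ × ℝ).2 := by
        rw [hn0] at hn; push_cast at hn; linarith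
      simp [Fmor, heq, hp]
    exact Filter.Tendsto.congr' (hev.mono fun q h => h.symm) tendsto_const_nhds
  · intro hc
    set p : IntRel := ⟨(1/2, 3/2), ⟨-1, by norm_num⟩⟩ with hp
    have hFp : Fmor p = 1 := by
      simp [Fmor, phi, hp]; norm_num
    set u : ℕ → IntRel := fun n =>
      ⟨(1/2 + 1/(n+1), 3/2 + 1/(n+1)), ⟨-1, by push_cast; ring⟩⟩ with hu
    have hulim : Filter.Tendsto u Filter.atTop (nhds p) := by
      rw [hp, tendsto_subtype_rng]
      have h1 : Filter.Tendsto (fun n : ℕ => 1/2 + 1/((n:ℝ)+1)) Filter.atTop (nhds (1/2)) := by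
        simpa using (tendsto_one_div_add_atTop_nhds_zero_nat).const_add (1/2:ℝ)
      have h2 : Filter.Tendsto (fun n : ℕ => 3/2 + 1/((n:ℝ)+1)) Filter.atTop (nhds (3/2)) := by
        simpa using (tendsto_one_div_add_atTop_nhds_zero_nat).const_add (3/2:ℝ)
      exact h1.prodMk_nhds h2
    have hFu : ∀ n, Fmor (u n) = 0 := by
      intro n
      have hpos : (0:ℝ) < 1/((n:ℝ)+1) := by positivity
      have h1 : ¬ (1/2 + 1/((n:ℝ)+1) ≤ 1/2) := by linarith
      have h2 : ¬ (3/2 + 1/((n:ℝ)+1) ≤ 1/2) := by linarith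
      show phi (3/2 + 1/((n:ℝ)+1)) - phi (1/2 + 1/((n:ℝ)+1)) = 0
      simp only [phi]
      rw [if_neg h2, if_neg h1]
      ring
    have hlim1 : Filter.Tendsto (fun n => Fmor (u n)) Filter.atTop (nhds 1) := by
      rw [← hFp]; exact (hc.tendsto).comp hulim
    have hlim0 : Filter.Tendsto (fun n => Fmor (u n)) Filter.atTop (nhds 0) := by
      simp only [hFu]
      exact tendsto_const_nhds
    exact zero_ne_one (tendsto_nhds_unique hlim0 hlim1)
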